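/- Let (A, B, C) be a recollement of abelian categories with a ladder of l-height three, and suppose B is n-Gorenstein. Then C is n-Gorenstein. -/

import Mathlib

open CategoryTheory CategoryTheory.Limits

universe v₁ v₂ v₃ u₁ u₂ u₃

/-- A recollement of abelian categories `(A, B, C)`: adjoint triples `(q, i, p)` and
`(l, e, r)` with `i`, `l`, `r` fully faithful and the essential image of `i` equal to
the kernel of `e`. -/
structure AbRecollement (A : Type u₁) (B : Type u₂) (C : Type u₃)
    [Category.{v₁} A] [Category.{v₂} B] [Category.{v₃} C]
    [Abelian A] [Abelian B] [Abelian C] where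
  i : A ⥤ B
  e : B ⥤ C
  q : B ⥤ A
  p : B ⥤ A
  l : C ⥤ B
  r : C ⥤ B
  adj_qi : q ⊣ i
  adj_ip : i ⊣ p
  adj_le : l ⊣ e
  adj_er : e ⊣ r
  i_full : i.Full
  i_faithful : i.Faithful
  l_full : l.Full
  l_faithful : l.Faithful
  r_full : r.Full
  r_faithful : r.Faithful
  essImage_i_eq_ker_e : ∀ X : B, i.essImage X ↔ Limits.IsZero (e.obj X)

universe w v u

/-- `X` has projective dimension `≤ n`: `Extⁱ(X, -) = 0` for all `i > n`. -/
def projDimLE {A : Type u} [Category.{v} A] [Abelian A] [CategoryTheory.HasExt.{w} A]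
    (X : A) (n : ℕ) : Prop :=
  ∀ (Y : A) (i : ℕ), n < i → Subsingleton (CategoryTheory.Abelian.Ext X Y i)

/-- `X` has injective dimension `≤ n`: `Extⁱ(-, X) = 0` for all `i > n`. -/
def injDimLE {A : Type u} [Category.{v} A] [Abelian A] [CategoryTheory.HasExt.{w} A]
    (X : A) (n : ℕ) : Prop :=
  ∀ (Y : A) (i : ℕ), n < i → Subsingleton (CategoryTheory.Abelian.Ext Y X i)

/-- An abelian category (with enough projectives and injectives) is `n`-Gorenstein if
`spli A ≤ n` (every injective has projective dimension `≤ n`) and `silp A ≤ n`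
(every projective has injective dimension `≤ n`). -/
def IsNGorenstein (A : Type u) [Category.{v} A] [Abelian A] [CategoryTheory.HasExt.{w} A]
    (n : ℕ) : Prop :=
  (∀ I : A, CategoryTheory.Injective I → projDimLE.{w} I n) ∧
  (∀ P : A, CategoryTheory.Projective P → injDimLE.{w} P n)

universe wA vA vB uA uB

namespace GorensteinAux

open CategoryTheory.Abelian DerivedCategory

variable {C : Type uA} {B : Type uB} [Category.{vA} C] [Category.{vB} B]
  [Abelian C] [Abelian B]

/-- Composition isomorphism for `mapHomologicalComplex`. -/
noncomputable def mapHCComp (F : C ⥤ B) {E : Type*} [Category E] [Preadditive E]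
    (G : B ⥤ E) [F.Additive] [G.Additive] {ι : Type*} (c : ComplexShape ι) :
    F.mapHomologicalComplex c ⋙ G.mapHomologicalComplex c ≅
      (F ⋙ G).mapHomologicalComplex c :=
  NatIso.ofComponents
    (fun K => HomologicalComplex.Hom.isoOfComponents (fun _ => Iso.refl _)
      (by intros; exact (Category.id_comp _).trans (Category.comp_id _).symm))
    (by intros; ext; exact (Category.comp_id _).trans (Category.id_comp _).symm)

lemma ext_subsingleton_of_exact_functor
    [HasExt.{w} C] [HasExt.{w} B]
    (F : C ⥤ B) (G : B ⥤ C)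
    [F.Additive] [PreservesFiniteLimits F] [PreservesFiniteColimits F]
    [G.Additive] [PreservesFiniteLimits G] [PreservesFiniteColimits G]
    (η : F ⋙ G ≅ 𝟭 C) (X Y : C) (n : ℕ)
    (h : Subsingleton (Abelian.Ext (F.obj X) (F.obj Y) n)) :
    Subsingleton (Abelian.Ext X Y n) := by
  letI : HasDerivedCategory C := HasDerivedCategory.standard C
  letI : HasDerivedCategory B := HasDerivedCategory.standard B
  haveI : Localization.Lifting DerivedCategory.Q
      (HomologicalComplex.quasiIso C (ComplexShape.up ℤ))
      (F.mapHomologicalComplex (ComplexShape.up ℤ) ⋙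
        G.mapHomologicalComplex (ComplexShape.up ℤ) ⋙ DerivedCategory.Q)
      (F.mapDerivedCategory ⋙ G.mapDerivedCategory) :=
    ⟨(Functor.associator _ _ _).symm ≪≫
      Functor.isoWhiskerRight F.mapDerivedCategoryFactors G.mapDerivedCategory ≪≫
      Functor.associator _ _ _ ≪≫
      Functor.isoWhiskerLeft _ G.mapDerivedCategoryFactors⟩
  have fgIso : F.mapDerivedCategory ⋙ G.mapDerivedCategory ≅ 𝟭 (DerivedCategory C) :=
    Localization.liftNatIso DerivedCategory.Q
      (HomologicalComplex.quasiIso C (ComplexShape.up ℤ))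
      (F.mapHomologicalComplex (ComplexShape.up ℤ) ⋙
        G.mapHomologicalComplex (ComplexShape.up ℤ) ⋙ DerivedCategory.Q)
      DerivedCategory.Q
      (F.mapDerivedCategory ⋙ G.mapDerivedCategory) (𝟭 _)
      ((Functor.associator _ _ _).symm ≪≫
        Functor.isoWhiskerRight (mapHCComp F G _) DerivedCategory.Q ≪≫
        Functor.isoWhiskerRight (NatIso.mapHomologicalComplex η _) DerivedCategory.Q ≪≫
        Functor.isoWhiskerRight (Functor.mapHomologicalComplexIdIso C _) DerivedCategory.Q ≪≫
        DerivedCategory.Q.leftUnitor)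
  haveI : F.mapDerivedCategory.Faithful := Functor.Faithful.of_comp_iso fgIso
  have τ : ∀ Z : C, F.mapDerivedCategory.obj ((singleFunctor C 0).obj Z) ≅
      (singleFunctor B 0).obj (F.obj Z) := fun Z =>
    F.mapDerivedCategory.mapIso
      (((SingleFunctors.evaluation C (DerivedCategory C) 0).mapIso
        (singleFunctorsPostcompQIso C)).app Z) ≪≫
    F.mapDerivedCategoryFactors.app _ ≪≫
    DerivedCategory.Q.mapIso
      ((HomologicalComplex.singleMapHomologicalComplex F (ComplexShape.up ℤ) 0).app Z) ≪≫
    (((SingleFunctors.evaluation B (DerivedCategory B) 0).mapIso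
      (singleFunctorsPostcompQIso B)).app (F.obj Z)).symm
  constructor
  intro α β
  apply Ext.ext
  apply F.mapDerivedCategory.map_injective
  set c : (F.mapDerivedCategory.obj (((singleFunctor C 0).obj Y)⟦(n : ℤ)⟧)) ⟶
      (((singleFunctor B 0).obj (F.obj Y))⟦(n : ℤ)⟧) :=
    (F.mapDerivedCategory.commShiftIso (n : ℤ)).hom.app ((singleFunctor C 0).obj Y) ≫
      ((τ Y).hom)⟦(n : ℤ)⟧' with hc
  have key : ∀ γ : Abelian.Ext X Y n,
      ∃ δ : Abelian.Ext (F.obj X) (F.obj Y) n,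
        Ext.homEquiv δ = (τ X).inv ≫ F.mapDerivedCategory.map γ.hom ≫ c := fun γ =>
    ⟨Ext.homEquiv.symm ((τ X).inv ≫ F.mapDerivedCategory.map γ.hom ≫ c), by
      simp [Equiv.apply_symm_apply]⟩
  obtain ⟨δα, hα⟩ := key α
  obtain ⟨δβ, hβ⟩ := key β
  have : δα = δβ := Subsingleton.elim _ _
  rw [this, hβ] at hα
  rw [cancel_epi] at hα
  haveI : IsIso c := by rw [hc]; infer_instance
  rw [cancel_mono] at hα
  exact hα.symm

end GorensteinAux

/-- Let `(A, B, C)` be a recollement of abelian categories with a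
ladder of `l`-height three, and suppose `B` is `n`-Gorenstein.  Then `C` is
`n`-Gorenstein. -/
theorem nGorenstein_of_ladder_l_height_three
    {A : Type u₁} {B : Type u₂} {C : Type u₃}
    [Category.{v₁} A] [Category.{v₂} B] [Category.{v₃} C]
    [Abelian A] [Abelian B] [Abelian C]
    [EnoughProjectives B] [EnoughInjectives B]
    [EnoughProjectives C] [EnoughInjectives C]
    [CategoryTheory.HasExt.{w} B] [CategoryTheory.HasExt.{w} C]
    (R : AbRecollement A B C)
    (l₁ : B ⥤ C) (l₂ : C ⥤ B)
    (adj₂₁ : l₂ ⊣ l₁) (adj₁₀ : l₁ ⊣ R.l)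
    (n : ℕ) (hB : IsNGorenstein.{w} B n) :
    IsNGorenstein.{w} C n := by
  haveI : R.l.Full := R.l_full
  haveI : R.l.Faithful := R.l_faithful
  haveI : PreservesColimitsOfSize.{0,0} R.l := R.adj_le.leftAdjoint_preservesColimits
  haveI : PreservesLimitsOfSize.{0,0} R.l := adj₁₀.rightAdjoint_preservesLimits
  haveI : PreservesColimitsOfSize.{0,0} R.e := R.adj_er.leftAdjoint_preservesColimits
  haveI : PreservesLimitsOfSize.{0,0} R.e := R.adj_le.rightAdjoint_preservesLimits
  haveI : R.l.IsLeftAdjoint := ⟨R.e, ⟨R.adj_le⟩⟩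
  haveI : R.e.IsLeftAdjoint := ⟨R.r, ⟨R.adj_er⟩⟩
  haveI : R.l.Additive := Functor.additive_of_preserves_binary_products _
  haveI : R.e.Additive := Functor.additive_of_preserves_binary_products _
  have η : R.l ⋙ R.e ≅ 𝟭 C := (asIso R.adj_le.unit).symm
  haveI : l₁.PreservesMonomorphisms := Functor.preservesMonomorphisms_of_adjunction adj₂₁
  haveI : R.e.PreservesEpimorphisms := Functor.preservesEpimorphisms_of_adjunction R.adj_er
  refine ⟨fun I hI Y i hi => ?_, fun P hP Y i hi => ?_⟩
  · exact GorensteinAux.ext_subsingleton_of_exact_functor R.l R.e η I Y i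
      (hB.1 (R.l.obj I) (adj₁₀.map_injective I hI) (R.l.obj Y) i hi)
  · exact GorensteinAux.ext_subsingleton_of_exact_functor R.l R.e η Y P i
      (hB.2 (R.l.obj P) (R.adj_le.map_projective P hP) (R.l.obj Y) i hi)
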